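/- Let L be a lattice of finite length in which for every join-irreducible j, the element j* (the join of all elements strictly below j) is standard. Then L is a strong lattice: for every join-irreducible j and every x ∈ L, j ≤ j* ∨ x implies j ≤ x. -/
import Mathlib

/-- An element `a` of a lattice is standard if
`x ⊓ (a ⊔ y) = (x ⊓ a) ⊔ (x ⊓ y)` for all `x, y`. -/
def IsStandardElt {L : Type*} [Lattice L] (a : L) : Prop :=
  ∀ x y : L, x ⊓ (a ⊔ y) = (x ⊓ a) ⊔ (x ⊓ y)

private lemma wfGT_of_bounded {L : Type*} [CompleteLattice L]
    (hfl : ∃ n : ℕ, ∀ c : LTSeries L, c.length ≤ n) : WellFoundedGT L := by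
  obtain ⟨n, hn⟩ := hfl
  constructor
  rw [RelEmbedding.wellFounded_iff_isEmpty]
  constructor
  intro g
  -- g : (ℕ, >) ↪r (L, >), i.e. g is strictly increasing
  have hmono : StrictMono g := fun a b hab => g.map_rel_iff.2 hab
  let c : LTSeries L := ⟨n + 1, fun i => g i, fun i => hmono (Nat.lt_succ_self i)⟩
  have := hn c
  simp only [c] at this
  omega

private lemma finsup_ne {L : Type*} [CompleteLattice L] {j : L}
    (hj0 : j ≠ ⊥) (hj : ∀ a b : L, j = a ⊔ b → j = a ∨ j = b)
    (F : Finset L) (hF : ∀ x ∈ F, x < j) : F.sup id ≠ j := by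
  classical
  induction F using Finset.induction_on with
  | empty => simpa using fun h => hj0 h.symm
  | @insert a F ha ih =>
    intro h
    rw [Finset.sup_insert] at h
    rcases hj _ _ h.symm with h1 | h2
    · exact absurd h1.symm (hF a (Finset.mem_insert_self a _)).ne
    · exact ih (fun x hx => hF x (Finset.mem_insert_of_mem hx)) h2.symm

/-- If `L` is a lattice of finite length in which `j* = ⋁{x | x < j}` is a
standard element for every join-irreducible `j`, then `L` is a strong
lattice: `j ≤ j* ⊔ x` implies `j ≤ x`. -/
theorem stmt15 {L : Type*} [CompleteLattice L]
    (hfl : ∃ n : ℕ, ∀ c : LTSeries L, c.length ≤ n)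
    (hstd : ∀ j : L, (j ≠ ⊥ ∧ ∀ a b : L, j = a ⊔ b → j = a ∨ j = b) →
      IsStandardElt (sSup {x : L | x < j})) :
    ∀ j : L, (j ≠ ⊥ ∧ ∀ a b : L, j = a ⊔ b → j = a ∨ j = b) →
      ∀ x : L, j ≤ sSup {y : L | y < j} ⊔ x → j ≤ x := by
  intro j hj x hle
  obtain ⟨hj0, hjirr⟩ := hj
  set js := sSup {y : L | y < j} with hjs
  -- js ≤ j
  have hjs_le : js ≤ j := sSup_le fun y hy => hy.le
  -- js ≠ j : use finite compactness
  have : WellFoundedGT L := wfGT_of_bounded hfl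
  obtain ⟨F, hFsub, hFsup⟩ :=
    CompleteLattice.WellFoundedGT.isSupFiniteCompact (α := L) {y : L | y < j}
  have hjs_ne : js ≠ j := by
    rw [hjs, hFsup]
    exact finsup_ne hj0 hjirr F (fun y hy => hFsub hy)
  -- standardness
  have hstd' := hstd j ⟨hj0, hjirr⟩ j x
  rw [← hjs] at hstd'
  have h1 : j ⊓ (js ⊔ x) = j := inf_eq_left.2 hle
  have h2 : j = js ⊔ (j ⊓ x) := by
    calc j = j ⊓ (js ⊔ x) := h1.symm
    _ = (j ⊓ js) ⊔ (j ⊓ x) := hstd'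
    _ = js ⊔ (j ⊓ x) := by rw [inf_eq_right.2 hjs_le]
  rcases hjirr _ _ h2 with h3 | h4
  · exact absurd h3.symm hjs_ne
  · exact h4.le.trans inf_le_right
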